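/- Let 2 ≤ k < n−1 and let f be a function on S^{n−1}. For v ∈ S^{n−k−1} and w ∈ S^k, let ξ(v,w) = T_v({η ∈ ℝ^{k+1} : η·w = 0}), a k-dimensional subspace of ℝ^n. Then ξ(v,w) is contained in ℝv ⊕ ℝ^k, the map T_v carries S^k_± ∩ w^⊥ isometrically onto S^{n−1}_± ∩ ξ(v,w), and whenever the integrals are absolutely convergent one has (F_k^± f)(ξ(v,w)) = (F̃_k^± f)(v,w), i.e., the restriction of the hemispherical transform F_k^± f to subspaces of the form ξ(v,w) coincides with the codimension-one hemispherical Funk transform on S^k of the rotated function η ↦ f(T_v η). -/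

import Mathlib

open MeasureTheory Metric
open scoped ENNReal RealInnerProductSpace

noncomputable section

abbrev E (n : ℕ) := EuclideanSpace ℝ (Fin n)

def lastCoord {n : ℕ} (x : E n) : ℝ :=
  if h : 0 < n then x ⟨n - 1, Nat.sub_lt h one_pos⟩ else 0

/-- The coordinate subspace `{x : x_j = 0 for all j < m}` (1-based coordinates `m+1,…,n`). -/
def coordZeroLT (n m : ℕ) : Submodule ℝ (E n) where
  carrier := {x | ∀ j : Fin n, (j : ℕ) < m → x j = 0}
  add_mem' := by
    intro a b ha hb j hj
    simp [PiLp.add_apply, ha j hj, hb j hj]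
  zero_mem' := by intro j hj; rfl
  smul_mem' := by
    intro c a ha j hj
    simp [PiLp.smul_apply, ha j hj]

/-- The subset of `ℝ^n` with vanishing coordinates `x_j` for `j ≥ m` (1-based `j > m`). -/
def coordZeroGE (n m : ℕ) : Set (E n) := {x | ∀ j : Fin n, m ≤ (j : ℕ) → x j = 0}

/-- The `i`-th coordinate functional on `ℝ^n` as a linear map. -/
def coordL (n : ℕ) (i : Fin n) : E n →ₗ[ℝ] ℝ := EuclideanSpace.projₗ i

/-- The linear isometry `T_v : ℝ^{k+1} → ℝ^n`, `T_v (t e_{n-k} + y) = t v + y`, extended to a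
linear map on all of `ℝ^n` (it sends `e_{n-k}` to `v`, keeps `e_{n-k+1},…,e_n`, and kills the
remaining basis vectors). -/
def Tv (n k : ℕ) (v : E n) : E n →ₗ[ℝ] E n :=
  (if h : n - k - 1 < n then LinearMap.smulRight (coordL n ⟨n - k - 1, h⟩) v else 0)
    + ∑ j ∈ Finset.univ.filter (fun j : Fin n => n - k ≤ (j : ℕ)),
        LinearMap.smulRight (coordL n j) (EuclideanSpace.single j 1)

/-- The sphere `S^{n-k-1} = S^{n-1} ∩ ℝ^{n-k}`. -/
def sphNK (n k : ℕ) : Set (E n) := Metric.sphere (0 : E n) 1 ∩ coordZeroGE n (n - k)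

/-- The sphere `S^k = S^{n-1} ∩ ℝ^{k+1}`. -/
def sphK (n k : ℕ) : Set (E n) :=
  Metric.sphere (0 : E n) 1 ∩ (coordZeroLT n (n - k - 1) : Set (E n))

/-- The hemispheres `S^k_±`. -/
def sphKplus (n k : ℕ) : Set (E n) := {θ ∈ sphK n k | 0 < lastCoord θ}
def sphKminus (n k : ℕ) : Set (E n) := {θ ∈ sphK n k | lastCoord θ < 0}

/-- The restricted hemispherical transforms `F̃ₖ^± f`. -/
def FtildePlus (n k : ℕ) (f : E n → ℝ) (v w : E n) : ℝ :=
  ∫ η in {η ∈ sphKplus n k | ⟪η, w⟫ = (0:ℝ)}, f (Tv n k v η) ∂μH[(k : ℝ) - 1]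

def FtildeMinus (n k : ℕ) (f : E n → ℝ) (v w : E n) : ℝ :=
  ∫ η in {η ∈ sphKminus n k | ⟪η, w⟫ = (0:ℝ)}, f (Tv n k v η) ∂μH[(k : ℝ) - 1]

/-- The product of the surface measures on `S^{n-k-1} × S^k`. -/
def pairMeasure (n k : ℕ) : Measure (E n × E n) :=
  (μH[(n : ℝ) - (k : ℝ) - 1].restrict (sphNK n k)).prod (μH[(k : ℝ)].restrict (sphK n k))


/-- The open upper/lower hemispheres `S^{n-1}_±`. -/
def upperHemi (n : ℕ) : Set (E n) := {θ ∈ Metric.sphere (0 : E n) 1 | 0 < lastCoord θ}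
def lowerHemi (n : ℕ) : Set (E n) := {θ ∈ Metric.sphere (0 : E n) 1 | lastCoord θ < 0}

/-- The `k`-dimensional subspace `ξ(v,w) = T_v {η ∈ ℝ^{k+1} : η ⋅ w = 0}`. -/
def xiVW (n k : ℕ) (v w : E n) : Submodule ℝ (E n) :=
  (coordZeroLT n (n - k - 1) ⊓ (ℝ ∙ w)ᗮ).map (Tv n k v)

namespace Stmt12Aux
open Module Submodule

lemma Tv_apply (n k : ℕ) (hn : n - k - 1 < n) (v x : E n) (i : Fin n) :
    Tv n k v x i = x ⟨n - k - 1, hn⟩ * v i + (if n - k ≤ (i : ℕ) then x i else 0) := by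
  classical
  have key : Tv n k v x i = EuclideanSpace.projₗ i (Tv n k v x) := rfl
  rw [key]
  unfold Tv
  rw [dif_pos hn, LinearMap.add_apply, map_add, LinearMap.sum_apply, map_sum]
  simp only [LinearMap.smulRight_apply, coordL, PiLp.projₗ_apply,
    LinearMap.map_smul, EuclideanSpace.projₗ, smul_eq_mul, EuclideanSpace.single_apply,
    mul_ite, mul_one, mul_zero, LinearMap.coe_mk, AddHom.coe_mk]
  congr 1
  rw [Finset.sum_ite_eq]
  simp

variable {n k : ℕ} {v w : E n}

lemma inner_eq_sum (x y : E n) : ⟪x, y⟫ = ∑ i, x i * y i := by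
  simp [PiLp.inner_apply, RCLike.inner_apply, conj_trivial]
  exact Finset.sum_congr rfl fun i _ => mul_comm _ _

lemma inner_Tv (hkn : k + 2 ≤ n) (hv : v ∈ sphNK n k)
    {x y : E n} (hx : x ∈ coordZeroLT n (n - k - 1)) (hy : y ∈ coordZeroLT n (n - k - 1)) :
    ⟪Tv n k v x, Tv n k v y⟫ = ⟪x, y⟫ := by
  have hn : n - k - 1 < n := by omega
  obtain ⟨hv1, hv2⟩ := hv
  rw [mem_sphere_zero_iff_norm] at hv1
  have hvsum : ∑ i, v i * v i = 1 := by
    have h := real_inner_self_eq_norm_sq v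
    rw [inner_eq_sum, hv1] at h
    simpa using h
  set m : Fin n := ⟨n - k - 1, hn⟩ with hm
  rw [inner_eq_sum, inner_eq_sum]
  have lhs : ∀ i : Fin n, Tv n k v x i * Tv n k v y i
      = (x m * y m) * (v i * v i) + (if n - k ≤ (i:ℕ) then x i * y i else 0) := by
    intro i
    rw [Tv_apply n k hn, Tv_apply n k hn]
    by_cases h : n - k ≤ (i : ℕ)
    · rw [if_pos h, if_pos h, if_pos h, hv2 i h]; ring
    · rw [if_neg h, if_neg h, if_neg h]; ring
  have him : (m : ℕ) = n - k - 1 := rfl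
  have rhs : ∀ i : Fin n, x i * y i
      = (if i = m then x m * y m else 0) + (if n - k ≤ (i:ℕ) then x i * y i else 0) := by
    intro i
    rcases lt_trichotomy (i : ℕ) (n - k - 1) with h | h | h
    · have hx0 : x i = 0 := hx i h
      have h2 : ¬ (n - k ≤ (i:ℕ)) := by omega
      have h3 : i ≠ m := by intro e; rw [e, him] at h; omega
      rw [if_neg h3, if_neg h2, hx0]; ring
    · have h3 : i = m := Fin.ext h
      have h2 : ¬ (n - k ≤ (i:ℕ)) := by omega
      rw [if_pos h3, if_neg h2, h3]; ring
    · have h2 : n - k ≤ (i:ℕ) := by omega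
      have h3 : i ≠ m := by intro e; rw [e, him] at h; omega
      rw [if_neg h3, if_pos h2]; ring
  calc ∑ i, Tv n k v x i * Tv n k v y i
      = ∑ i, ((x m * y m) * (v i * v i) + (if n - k ≤ (i:ℕ) then x i * y i else 0)) :=
        Finset.sum_congr rfl fun i _ => lhs i
    _ = ∑ i, ((if i = m then x m * y m else 0) + (if n - k ≤ (i:ℕ) then x i * y i else 0)) := by
        rw [Finset.sum_add_distrib, Finset.sum_add_distrib, ← Finset.mul_sum, hvsum,
          Finset.sum_ite_eq' Finset.univ m, if_pos (Finset.mem_univ m), mul_one]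
    _ = ∑ i, x i * y i := Finset.sum_congr rfl fun i _ => (rhs i).symm

lemma norm_Tv (hkn : k + 2 ≤ n) (hv : v ∈ sphNK n k)
    {x : E n} (hx : x ∈ coordZeroLT n (n - k - 1)) : ‖Tv n k v x‖ = ‖x‖ := by
  have h := inner_Tv hkn hv hx hx
  rw [real_inner_self_eq_norm_sq, real_inner_self_eq_norm_sq] at h
  calc ‖Tv n k v x‖ = Real.sqrt (‖Tv n k v x‖ ^ 2) := (Real.sqrt_sq (norm_nonneg _)).symm
    _ = Real.sqrt (‖x‖ ^ 2) := by rw [h]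
    _ = ‖x‖ := Real.sqrt_sq (norm_nonneg _)

lemma lastCoord_Tv (hk1 : 1 ≤ k) (hkn : k + 2 ≤ n) (hv : v ∈ sphNK n k) (x : E n) :
    lastCoord (Tv n k v x) = lastCoord x := by
  have hn0 : 0 < n := by omega
  have hn : n - k - 1 < n := by omega
  unfold lastCoord
  rw [dif_pos hn0, dif_pos hn0, Tv_apply n k hn,
    hv.2 ⟨n-1, Nat.sub_lt hn0 one_pos⟩ (by show n - k ≤ n - 1; omega),
    if_pos (show n - k ≤ ((⟨n-1, Nat.sub_lt hn0 one_pos⟩ : Fin n) : ℕ) by show n - k ≤ n - 1; omega)]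
  ring

lemma finrank_coordZeroLT (n m : ℕ) :
    Module.finrank ℝ (coordZeroLT n m) = Fintype.card {j : Fin n // m ≤ (j:ℕ)} := by
  classical
  let φ : coordZeroLT n m →ₗ[ℝ] ({j : Fin n // m ≤ (j:ℕ)} → ℝ) :=
    { toFun := fun x j => (x : E n) j.1
      map_add' := fun a b => rfl
      map_smul' := fun c a => rfl }
  have hbij : Function.Bijective φ := by
    constructor
    · intro a b hab
      apply Subtype.ext
      ext j
      by_cases h : m ≤ (j:ℕ)
      · exact congrFun hab ⟨j, h⟩
      · rw [a.2 j (by omega), b.2 j (by omega)]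
    · intro g
      refine ⟨⟨WithLp.toLp 2 (fun j => if h : m ≤ (j:ℕ) then g ⟨j, h⟩ else 0), fun j hj => by
        show (if h : m ≤ (j:ℕ) then g ⟨j, h⟩ else 0) = 0; exact dif_neg (by omega)⟩, ?_⟩
      funext j
      exact dif_pos j.2
  rw [(LinearEquiv.ofBijective φ hbij).finrank_eq, Module.finrank_fintype_fun_eq_card]

lemma card_subtype_le (n m : ℕ) (h : m ≤ n) :
    Fintype.card {j : Fin n // m ≤ (j:ℕ)} = n - m := by
  have e : {j : Fin n // m ≤ (j:ℕ)} ≃ Fin (n - m) :=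
    { toFun := fun j => ⟨(j:ℕ) - m, by have := j.1.isLt; omega⟩
      invFun := fun i => ⟨⟨m + i, by have := i.isLt; omega⟩, by simp⟩
      left_inv := fun j => by
        apply Subtype.ext; apply Fin.ext
        have := j.2; simp at this ⊢; omega
      right_inv := fun i => by apply Fin.ext; simp }
  rw [Fintype.card_congr e, Fintype.card_fin]

lemma finrank_W (hk1 : 1 ≤ k) (hkn : k + 2 ≤ n) (hw : w ∈ sphK n k) :
    Module.finrank ℝ ((coordZeroLT n (n-k-1) ⊓ (ℝ ∙ w)ᗮ : Submodule ℝ (E n))) = k := by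
  have hw1 : ‖w‖ = 1 := mem_sphere_zero_iff_norm.mp hw.1
  have hw0 : w ≠ 0 := by intro e; rw [e, norm_zero] at hw1; norm_num at hw1
  have hwV : w ∈ coordZeroLT n (n-k-1) := hw.2
  set V := coordZeroLT n (n-k-1) with hV
  set W := V ⊓ (ℝ ∙ w)ᗮ with hW
  have hVfin : Module.finrank ℝ V = k + 1 := by
    rw [hV, finrank_coordZeroLT, card_subtype_le n (n-k-1) (by omega)]; omega
  have hsup : (ℝ ∙ w) ⊔ W = V := by
    apply le_antisymm
    · apply sup_le
      · rwa [Submodule.span_singleton_le_iff_mem]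
      · exact inf_le_left
    · intro x hx
      have hx' : x - ⟪w, x⟫ • w ∈ W := by
        refine Submodule.mem_inf.mpr ⟨?_, ?_⟩
        · exact V.sub_mem hx (V.smul_mem _ hwV)
        · rw [Submodule.mem_orthogonal_singleton_iff_inner_right, inner_sub_right,
            real_inner_smul_right, real_inner_self_eq_norm_sq, hw1]
          ring
      have hxx : x = ⟪w, x⟫ • w + (x - ⟪w, x⟫ • w) := by abel
      rw [hxx]
      exact Submodule.add_mem _
        (Submodule.mem_sup_left (Submodule.smul_mem _ _ (Submodule.mem_span_singleton_self w)))
        (Submodule.mem_sup_right hx')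
  have hinf : (ℝ ∙ w) ⊓ W = ⊥ := by
    rw [eq_bot_iff]
    intro x hx
    have h1 : x ∈ (ℝ ∙ w) ⊓ (ℝ ∙ w)ᗮ := ⟨hx.1, hx.2.2⟩
    rwa [Submodule.inf_orthogonal_eq_bot] at h1
  have hh := Submodule.finrank_sup_add_finrank_inf_eq (ℝ ∙ w) W
  rw [hsup, hinf, finrank_span_singleton hw0, finrank_bot, hVfin] at hh
  omega

lemma finrank_xi (hk1 : 1 ≤ k) (hkn : k + 2 ≤ n) (hv : v ∈ sphNK n k) (hw : w ∈ sphK n k) :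
    Module.finrank ℝ (xiVW n k v w) = k := by
  set W := coordZeroLT n (n-k-1) ⊓ (ℝ ∙ w)ᗮ with hWdef
  set g := (Tv n k v) ∘ₗ W.subtype with hg
  have hrange : xiVW n k v w = LinearMap.range g := by
    rw [hg, LinearMap.range_comp, Submodule.range_subtype]; rfl
  have hker : LinearMap.ker g = ⊥ := by
    rw [eq_bot_iff]
    intro x hx
    have h0 : Tv n k v (x : E n) = 0 := hx
    have h1 : ‖(x : E n)‖ = 0 := by
      rw [← norm_Tv hkn hv (Submodule.mem_inf.mp x.2).1, h0, norm_zero]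
    have : (x : E n) = 0 := norm_eq_zero.mp h1
    simpa [Submodule.mem_bot] using Subtype.ext this
  have hh := LinearMap.finrank_range_add_finrank_ker g
  rw [hker, finrank_bot, add_zero] at hh
  rw [hrange, hh]; exact finrank_W hk1 hkn hw

lemma xi_le (hk1 : 1 ≤ k) (hkn : k + 2 ≤ n) :
    xiVW n k v w ≤ (ℝ ∙ v) ⊔ coordZeroLT n (n - k) := by
  rintro θ ⟨x, hx, rfl⟩
  have hn : n - k - 1 < n := by omega
  set m : Fin n := ⟨n - k - 1, hn⟩ with hm
  have hz : Tv n k v x - x m • v ∈ coordZeroLT n (n - k) := by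
    intro j hj
    have h1 : Tv n k v x j = x m * v j := by
      rw [Tv_apply n k hn, if_neg (by omega)]; ring
    have h2 : (Tv n k v x - x m • v) j = Tv n k v x j - x m * v j := rfl
    rw [h2, h1, sub_self]
  have hxx : Tv n k v x = x m • v + (Tv n k v x - x m • v) := by abel
  rw [hxx]
  exact Submodule.add_mem _
    (Submodule.mem_sup_left (Submodule.smul_mem _ _ (Submodule.mem_span_singleton_self v)))
    (Submodule.mem_sup_right hz)

lemma dist_Tv (hkn : k + 2 ≤ n) (hv : v ∈ sphNK n k) {x y : E n}
    (hx : x ∈ coordZeroLT n (n - k - 1)) (hy : y ∈ coordZeroLT n (n - k - 1)) :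
    ‖Tv n k v x - Tv n k v y‖ = ‖x - y‖ := by
  rw [← map_sub]
  exact norm_Tv hkn hv (Submodule.sub_mem _ hx hy)

lemma bijOn_gen (hk1 : 1 ≤ k) (hkn : k + 2 ≤ n) (hv : v ∈ sphNK n k) (hw : w ∈ sphK n k)
    (P : ℝ → Prop) :
    Set.BijOn (Tv n k v) {η ∈ {θ ∈ sphK n k | P (lastCoord θ)} | ⟪η, w⟫ = (0:ℝ)}
      ({θ ∈ Metric.sphere (0:E n) 1 | P (lastCoord θ)} ∩ (xiVW n k v w : Set (E n))) := by
  refine ⟨?_, ?_, ?_⟩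
  · rintro η ⟨⟨⟨hsph, hV⟩, hP⟩, hinner⟩
    refine ⟨⟨?_, ?_⟩, ?_⟩
    · rw [mem_sphere_zero_iff_norm, norm_Tv hkn hv hV]
      exact mem_sphere_zero_iff_norm.mp hsph
    · rwa [lastCoord_Tv hk1 hkn hv]
    · exact ⟨η, ⟨hV, Submodule.mem_orthogonal_singleton_iff_inner_right.mpr
        (by rwa [real_inner_comm])⟩, rfl⟩
  · rintro x ⟨⟨⟨hsx, hVx⟩, _⟩, _⟩ y ⟨⟨⟨hsy, hVy⟩, _⟩, _⟩ hxy
    have h1 : ‖x - y‖ = 0 := by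
      rw [← dist_Tv hkn hv hVx hVy, hxy, sub_self, norm_zero]
    exact sub_eq_zero.mp (norm_eq_zero.mp h1)
  · rintro θ ⟨⟨hsph, hP⟩, hxi⟩
    obtain ⟨η, hη, rfl⟩ := hxi
    obtain ⟨hV, horth⟩ := Submodule.mem_inf.mp hη
    refine ⟨η, ⟨⟨⟨?_, hV⟩, ?_⟩, ?_⟩, rfl⟩
    · rw [mem_sphere_zero_iff_norm, ← norm_Tv hkn hv hV]
      exact mem_sphere_zero_iff_norm.mp hsph
    · rwa [lastCoord_Tv hk1 hkn hv] at hP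
    · rw [real_inner_comm]
      exact Submodule.mem_orthogonal_singleton_iff_inner_right.mp horth

lemma measurable_lastCoord (hn0 : 0 < n) : Continuous (lastCoord : E n → ℝ) := by
  have h : (lastCoord : E n → ℝ) = fun x => EuclideanSpace.proj (⟨n-1, Nat.sub_lt hn0 one_pos⟩ : Fin n) x :=
    funext fun x => dif_pos hn0
  rw [h]
  exact (EuclideanSpace.proj _).continuous

lemma meas_gen (hn0 : 0 < n) (P : Set ℝ) (hP : MeasurableSet P) :
    MeasurableSet {η ∈ {θ ∈ sphK n k | lastCoord θ ∈ P} | ⟪η, w⟫ = (0:ℝ)} := by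
  have h1 : MeasurableSet (Metric.sphere (0:E n) 1) := (isClosed_sphere).measurableSet
  have h2 : MeasurableSet ((coordZeroLT n (n - k - 1) : Submodule ℝ (E n)) : Set (E n)) :=
    (Submodule.closed_of_finiteDimensional _).measurableSet
  have h3 : MeasurableSet {x : E n | lastCoord x ∈ P} :=
    (measurable_lastCoord hn0).measurable hP
  have h4 : MeasurableSet {x : E n | ⟪x, w⟫ = (0:ℝ)} := by
    have hc : Continuous fun x : E n => (⟪x, w⟫ : ℝ) := Continuous.inner continuous_id continuous_const
    exact hc.measurable (measurableSet_singleton (0:ℝ))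
  exact (((h1.inter h2).inter h3).inter h4)

lemma integral_Tv (hkn : k + 2 ≤ n) (hv : v ∈ sphNK n k)
    (f : E n → ℝ) (s : Set (E n)) (hs : MeasurableSet s)
    (hsV : s ⊆ ((coordZeroLT n (n - k - 1) : Submodule ℝ (E n)) : Set (E n))) :
    ∫ θ in (Tv n k v) '' s, f θ ∂μH[(k:ℝ)-1] = ∫ η in s, f (Tv n k v η) ∂μH[(k:ℝ)-1] := by
  set V := coordZeroLT n (n - k - 1) with hVdef
  let L : V →ₗᵢ[ℝ] E n := ⟨(Tv n k v).domRestrict V, fun x => norm_Tv hkn hv x.2⟩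
  let e : E n →ₗᵢ[ℝ] E n := L.extend
  have hagree : ∀ x ∈ s, e x = Tv n k v x := by
    intro x hx
    exact L.extend_apply (⟨x, hsV hx⟩ : V)
  have hsurj : Function.Surjective ⇑e :=
    LinearMap.injective_iff_surjective.mp e.injective
  have hiso : Isometry ⇑e := e.isometry
  have hmp : MeasurePreserving (⇑e) (μH[(k:ℝ)-1] : Measure (E n)) μH[(k:ℝ)-1] := by
    refine ⟨hiso.continuous.measurable, ?_⟩
    rw [hiso.map_hausdorffMeasure (Or.inr hsurj), Set.range_eq_univ.mpr hsurj,
      Measure.restrict_univ]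
  have hemb : MeasurableEmbedding (⇑e) := (hiso.isClosedEmbedding).measurableEmbedding
  have himg : Tv n k v '' s = ⇑e '' s := Set.image_congr fun x hx => (hagree x hx).symm
  rw [himg, hmp.setIntegral_image_emb hemb]
  exact setIntegral_congr_fun hs fun x hx => by rw [hagree x hx]

end Stmt12Aux

open Stmt12Aux in
theorem stmt12 (n k : ℕ) (hk2 : 2 ≤ k) (hk : k < n - 1)
    (f : E n → ℝ) (v w : E n) (hv : v ∈ sphNK n k) (hw : w ∈ sphK n k) :
    Module.finrank ℝ (xiVW n k v w) = k ∧
    xiVW n k v w ≤ (ℝ ∙ v) ⊔ coordZeroLT n (n - k) ∧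
    (Set.BijOn (Tv n k v) {η ∈ sphKplus n k | ⟪η, w⟫ = (0:ℝ)}
        (upperHemi n ∩ (xiVW n k v w : Set (E n))) ∧
      ∀ x ∈ {η ∈ sphKplus n k | ⟪η, w⟫ = (0:ℝ)},
        ∀ y ∈ {η ∈ sphKplus n k | ⟪η, w⟫ = (0:ℝ)},
          ‖Tv n k v x - Tv n k v y‖ = ‖x - y‖) ∧
    (Set.BijOn (Tv n k v) {η ∈ sphKminus n k | ⟪η, w⟫ = (0:ℝ)}
        (lowerHemi n ∩ (xiVW n k v w : Set (E n))) ∧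
      ∀ x ∈ {η ∈ sphKminus n k | ⟪η, w⟫ = (0:ℝ)},
        ∀ y ∈ {η ∈ sphKminus n k | ⟪η, w⟫ = (0:ℝ)},
          ‖Tv n k v x - Tv n k v y‖ = ‖x - y‖) ∧
    (IntegrableOn f (upperHemi n ∩ (xiVW n k v w : Set (E n))) μH[(k : ℝ) - 1] →
      IntegrableOn (fun η => f (Tv n k v η)) {η ∈ sphKplus n k | ⟪η, w⟫ = (0:ℝ)}
        μH[(k : ℝ) - 1] →
      (∫ θ in upperHemi n ∩ (xiVW n k v w : Set (E n)), f θ ∂μH[(k : ℝ) - 1])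
        = FtildePlus n k f v w) ∧
    (IntegrableOn f (lowerHemi n ∩ (xiVW n k v w : Set (E n))) μH[(k : ℝ) - 1] →
      IntegrableOn (fun η => f (Tv n k v η)) {η ∈ sphKminus n k | ⟪η, w⟫ = (0:ℝ)}
        μH[(k : ℝ) - 1] →
      (∫ θ in lowerHemi n ∩ (xiVW n k v w : Set (E n)), f θ ∂μH[(k : ℝ) - 1])
        = FtildeMinus n k f v w) := by
  have hkn : k + 2 ≤ n := by omega
  have hk1 : 1 ≤ k := by omega
  have hn0 : 0 < n := by omega
  have hbijP := bijOn_gen (v := v) (w := w) hk1 hkn hv hw (fun t => 0 < t)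
  have hbijM := bijOn_gen (v := v) (w := w) hk1 hkn hv hw (fun t => t < 0)
  refine ⟨finrank_xi hk1 hkn hv hw, xi_le hk1 hkn, ⟨hbijP, ?_⟩, ⟨hbijM, ?_⟩, ?_, ?_⟩
  · intro x hx y hy
    exact dist_Tv hkn hv hx.1.1.2 hy.1.1.2
  · intro x hx y hy
    exact dist_Tv hkn hv hx.1.1.2 hy.1.1.2
  · intro _ _
    calc ∫ θ in upperHemi n ∩ (xiVW n k v w : Set (E n)), f θ ∂μH[(k:ℝ)-1]
        = ∫ θ in Tv n k v '' {η ∈ sphKplus n k | ⟪η, w⟫ = (0:ℝ)}, f θ ∂μH[(k:ℝ)-1] := by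
          rw [show Tv n k v '' {η ∈ sphKplus n k | ⟪η, w⟫ = (0:ℝ)}
              = upperHemi n ∩ (xiVW n k v w : Set (E n)) from hbijP.image_eq]
      _ = FtildePlus n k f v w :=
          integral_Tv hkn hv f _ (meas_gen hn0 {t : ℝ | 0 < t} measurableSet_Ioi)
            (fun x hx => hx.1.1.2)
  · intro _ _
    calc ∫ θ in lowerHemi n ∩ (xiVW n k v w : Set (E n)), f θ ∂μH[(k:ℝ)-1]
        = ∫ θ in Tv n k v '' {η ∈ sphKminus n k | ⟪η, w⟫ = (0:ℝ)}, f θ ∂μH[(k:ℝ)-1] := by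
          rw [show Tv n k v '' {η ∈ sphKminus n k | ⟪η, w⟫ = (0:ℝ)}
              = lowerHemi n ∩ (xiVW n k v w : Set (E n)) from hbijM.image_eq]
      _ = FtildeMinus n k f v w :=
          integral_Tv hkn hv f _ (meas_gen hn0 {t : ℝ | t < 0} measurableSet_Iio)
            (fun x hx => hx.1.1.2)

end
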